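/- Sufficiency of the 3-connectivity criterion for triangulations: let Γ be a triangulation of the 2-sphere with N ≥ 4 vertices all on a Hamiltonian cycle γ whose edges belong to Γ. If no pair of vertices is joined by both a top edge and a bottom edge of Γ, then Γ is 3-connected. -/

import Mathlib

open Fin.NatCast Fin.CommRing

section Helpers
variable {N : ℕ} [NeZero N]

lemma fin_pos_eq (u x : Fin N) : u + (((x - u).val : ℕ) : Fin N) = x := by
  rw [Fin.cast_val_eq_self, add_comm, sub_add_cancel]

lemma fin_ne_iff (x u : Fin N) : x ≠ u ↔ (x - u).val ≠ 0 := by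
  constructor
  · intro h h0
    exact h (by rw [← sub_eq_zero]; exact Fin.ext (by simpa using h0))
  · intro h h0; subst h0; simp at h

lemma fin_pos_inj {x y u : Fin N} (h : (x - u).val = (y - u).val) : x = y := by
  have : x - u = y - u := Fin.ext h
  exact sub_left_inj.mp this

lemma pos_of_add (u : Fin N) (j : ℕ) (hj : j < N) : ((u + (j : Fin N)) - u).val = j := by
  rw [add_comm, add_sub_cancel_right, Fin.val_cast_of_lt hj]

lemma fin_neg_val {u w : Fin N} (h : u ≠ w) : (u - w).val = N - (w - u).val := by
  have h1 : (u - w) + (w - u) = 0 := by rw [sub_add_sub_cancel, sub_self]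
  have h2 : ((u - w).val + (w - u).val) % N = 0 := by
    have := congrArg Fin.val h1
    rw [Fin.add_def] at this
    simpa using this
  have ha : (u - w).val ≠ 0 := (fin_ne_iff u w).mp h
  have hb : (w - u).val ≠ 0 := (fin_ne_iff w u).mp h.symm
  have ha' := (u - w).is_lt
  have hb' := (w - u).is_lt
  obtain ⟨q, hq⟩ := Nat.dvd_of_mod_eq_zero h2
  match q, hq with
  | 0, hq => omega
  | 1, hq => omega
  | (q+2), hq => have : N * (q+2) = N * q + N + N := by ring
                 omega
end Helpers



/-- `x` lies strictly between `a` and `b` going in the positive cyclic direction on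
the Hamiltonian cycle `0, 1, …, N-1`. -/
def CyclicBtw {N : ℕ} (a b x : Fin N) : Prop :=
  x ≠ a ∧ x ≠ b ∧ (x - a).val < (b - a).val

/-- Two chords `{a, b}` and `{c, d}` of the cycle cross. -/
def ChordCross {N : ℕ} (a b c d : Fin N) : Prop :=
  CyclicBtw a b c ∧ CyclicBtw b a d

/-- A symmetric relation of pairwise noncrossing chords between non-adjacent vertices
of the Hamiltonian cycle. -/
def IsChordRel {N : ℕ} [NeZero N] (R : Fin N → Fin N → Prop) : Prop :=
  (∀ a b, R a b → R b a) ∧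
  (∀ a b, R a b → a ≠ b ∧ b ≠ a + 1 ∧ a ≠ b + 1) ∧
  (∀ a b c d, R a b → R c d → ¬ ChordCross a b c d)

/-- A maximal noncrossing chord family in one region: every further chord would cross
one of its members.  This encodes that the region is triangulated. -/
def IsTriangulatingChordRel {N : ℕ} [NeZero N] (R : Fin N → Fin N → Prop) : Prop :=
  IsChordRel R ∧
  ∀ a b : Fin N, (a ≠ b ∧ b ≠ a + 1 ∧ a ≠ b + 1) → ¬ R a b →
    ∃ c d, R c d ∧ ChordCross a b c d

/-- Sufficiency of the 3-connectivity criterion for triangulations: if the top and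
bottom chords triangulate the two disks and no pair of vertices is joined both by a
top edge and a bottom edge, then removing any two vertices leaves the graph
connected, i.e. `Γ` is 3-connected. -/
theorem three_connected_of_no_double_chord (N : ℕ) [NeZero N] (hN : 4 ≤ N)
    (G : SimpleGraph (Fin N)) (top bot : Fin N → Fin N → Prop)
    (htop : IsTriangulatingChordRel top) (hbot : IsTriangulatingChordRel bot)
    (hadj : ∀ u v, G.Adj u v ↔ (v = u + 1 ∨ u = v + 1 ∨ top u v ∨ bot u v))
    (hno : ∀ a b, ¬ (top a b ∧ bot a b)) :
    ∀ u w : Fin N, (G.induce {x : Fin N | x ≠ u ∧ x ≠ w}).Connected := by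
  intro u w
  set S : Set (Fin N) := {x : Fin N | x ≠ u ∧ x ≠ w} with hSdef
  set k : ℕ := (w - u).val with hk
  have hkN : k < N := (w - u).is_lt
  -- membership characterization
  have mem_iff : ∀ x : Fin N, x ∈ S ↔ ((x - u).val ≠ 0 ∧ (x - u).val ≠ k) := by
    intro x
    simp only [hSdef, Set.mem_setOf_eq]
    constructor
    · rintro ⟨h1, h2⟩
      exact ⟨(fin_ne_iff x u).mp h1, fun he => h2 (fin_pos_inj he)⟩
    · rintro ⟨h1, h2⟩
      exact ⟨(fin_ne_iff x u).mpr h1, fun he => h2 (by rw [he])⟩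
  have memJ : ∀ j : ℕ, 0 < j → j < N → j ≠ k → (u + (j : Fin N)) ∈ S := by
    intro j h1 h2 h3
    rw [mem_iff, pos_of_add u j h2]
    exact ⟨by omega, h3⟩
  -- reachability relation
  set R : Fin N → Fin N → Prop :=
    fun x y => ∃ (hx : x ∈ S) (hy : y ∈ S), (G.induce S).Reachable ⟨x, hx⟩ ⟨y, hy⟩ with hRdef
  have Rrefl : ∀ x, x ∈ S → R x x := fun x hx => ⟨hx, hx, SimpleGraph.Reachable.refl _⟩
  have Rsymm : ∀ x y, R x y → R y x := by
    rintro x y ⟨hx, hy, h⟩; exact ⟨hy, hx, h.symm⟩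
  have Rtrans : ∀ x y z, R x y → R y z → R x z := by
    rintro x y z ⟨hx, hy, h⟩ ⟨hy', hz, h'⟩
    exact ⟨hx, hz, h.trans h'⟩
  have Radj : ∀ x y, x ∈ S → y ∈ S → G.Adj x y → R x y := by
    intro x y hx hy h
    exact ⟨hx, hy, SimpleGraph.Adj.reachable (by simpa using h)⟩
  have cast_add : ∀ (s i : ℕ), (u + (s : Fin N)) + (i : Fin N) = u + ((s + i : ℕ) : Fin N) := by
    intro s i; push_cast; ring
  -- arc lemma
  have arc : ∀ (s d : ℕ), (∀ i : ℕ, i ≤ d → (u + ((s + i : ℕ) : Fin N)) ∈ S) →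
      R (u + (s : Fin N)) (u + ((s + d : ℕ) : Fin N)) := by
    intro s d
    induction d with
    | zero => intro h; simpa using Rrefl _ (by simpa using h 0 le_rfl)
    | succ d ih =>
      intro h
      have h1 := ih (fun i hi => h i (hi.trans (Nat.le_succ d)))
      refine Rtrans _ _ _ h1 ?_
      have hm : (u + ((s + d : ℕ) : Fin N)) ∈ S := h d (Nat.le_succ d)
      have hm' : (u + ((s + (d+1) : ℕ) : Fin N)) ∈ S := h (d+1) le_rfl
      refine Radj _ _ hm hm' ?_
      rw [hadj]
      left
      push_cast; ring
  have arcJ : ∀ (s j : ℕ), 0 < s → s ≤ j → j < N → (∀ i, s ≤ i → i ≤ j → i ≠ k) →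
      R (u + (s : Fin N)) (u + (j : Fin N)) := by
    intro s j hs hsj hjN hne
    have := arc s (j - s) ?_
    · have e : s + (j - s) = j := by omega
      rwa [e] at this
    · intro i hi
      exact memJ (s + i) (by omega) (by omega) (hne (s + i) (by omega) (by omega))
  -- express every element of S as u + j
  have repr : ∀ x ∈ S, ∃ j : ℕ, 0 < j ∧ j < N ∧ j ≠ k ∧ x = u + (j : Fin N) := by
    intro x hx
    rw [mem_iff] at hx
    exact ⟨(x - u).val, by omega, (x - u).is_lt, hx.2, (fin_pos_eq u x).symm⟩
  -- find a base vertex reaching everything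
  have main : ∃ b, ∀ x ∈ S, R b x := by
    by_cases hk1 : k ≤ 1
    · refine ⟨u + ((k + 1 : ℕ) : Fin N), ?_⟩
      intro x hx
      obtain ⟨j, hj0, hjN, hjk, rfl⟩ := repr x hx
      exact arcJ (k+1) j (by omega) (by omega) hjN (fun i h1 h2 => by omega)
    · by_cases hk2 : k = N - 1
      · refine ⟨u + ((1 : ℕ) : Fin N), ?_⟩
        intro x hx
        obtain ⟨j, hj0, hjN, hjk, rfl⟩ := repr x hx
        exact arcJ 1 j (by omega) (by omega) hjN (fun i h1 h2 => by omega)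
      · -- main case : 2 ≤ k ≤ N - 2, need a bridging chord
        have huw : u ≠ w := by
          intro h
          have h0 : k = 0 := by rw [hk, h, sub_self, Fin.val_zero]
          omega
        have hwu1 : w ≠ u + 1 := by
          intro h
          have : k = 1 := by rw [hk, h]; exact pos_of_add u 1 (by omega)
          omega
        have huw1 : u ≠ w + 1 := by
          intro h
          have h1 : (u - w).val = 1 := by rw [h]; exact pos_of_add w 1 (by omega)
          have h2 := fin_neg_val huw
          omega
        have bridge : ∃ c d, G.Adj c d ∧ ChordCross u w c d := by
          by_cases htw : top u w
          · have hbw : ¬ bot u w := fun h => hno u w ⟨htw, h⟩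
            obtain ⟨c, d, hcd, hcross⟩ := hbot.2 u w ⟨huw, hwu1, huw1⟩ hbw
            exact ⟨c, d, (hadj c d).mpr (Or.inr (Or.inr (Or.inr hcd))), hcross⟩
          · obtain ⟨c, d, hcd, hcross⟩ := htop.2 u w ⟨huw, hwu1, huw1⟩ htw
            exact ⟨c, d, (hadj c d).mpr (Or.inr (Or.inr (Or.inl hcd))), hcross⟩
        obtain ⟨c, d, hcdadj, ⟨hcu, hcw, hclt⟩, ⟨hdw, hdu, hdlt⟩⟩ := bridge
        set jc : ℕ := (c - u).val with hjc
        have hjc0 : jc ≠ 0 := (fin_ne_iff c u).mp hcu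
        have hjck : jc < k := hclt
        -- position of d
        set jd : ℕ := (d - u).val with hjd
        have hdw0 : (d - w).val ≠ 0 := (fin_ne_iff d w).mp hdw
        have hdltN : (d - w).val < N - k := by
          have := fin_neg_val huw
          omega
        have hjdval : jd = (d - w).val + k := by
          have e : (d - w) + (w - u) = d - u := sub_add_sub_cancel d w u
          have h2 : ((d - w).val + (w - u).val) % N = (d - u).val := by
            have := congrArg Fin.val e
            rw [Fin.add_def] at this
            simpa using this
          rw [← hk] at h2
          calc jd = ((d - w).val + k) % N := h2.symm
            _ = (d - w).val + k := Nat.mod_eq_of_lt (by omega)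
        have hjdk : k < jd := by omega
        have hjdN : jd < N := (d - u).is_lt
        -- c and d in S
        have hcS : c ∈ S := (mem_iff c).mpr ⟨hjc0, by omega⟩
        have hdS : d ∈ S := (mem_iff d).mpr ⟨by omega, by omega⟩
        -- base is u + 1 : reaches all of arc A, then c, then d, then arc B
        refine ⟨u + ((1 : ℕ) : Fin N), ?_⟩
        have reachA : ∀ j : ℕ, 0 < j → j < k → R (u + ((1:ℕ) : Fin N)) (u + (j : Fin N)) :=
          fun j h1 h2 => arcJ 1 j (by omega) (by omega) (by omega) (fun i hi1 hi2 => by omega)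
        have reachB : ∀ j : ℕ, k < j → j < N → R (u + ((k+1 : ℕ) : Fin N)) (u + (j : Fin N)) :=
          fun j h1 h2 => arcJ (k+1) j (by omega) (by omega) (by omega) (fun i hi1 hi2 => by omega)
        have hcrepr : c = u + ((jc : ℕ) : Fin N) := (fin_pos_eq u c).symm
        have hdrepr : d = u + ((jd : ℕ) : Fin N) := (fin_pos_eq u d).symm
        have hRc : R (u + ((1:ℕ) : Fin N)) c := by
          rw [hcrepr]; exact reachA jc (by omega) hjck
        have hRd : R (u + ((1:ℕ) : Fin N)) d :=
          Rtrans _ _ _ hRc (Radj c d hcS hdS hcdadj)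
        have hRB : ∀ j : ℕ, k < j → j < N → R (u + ((1:ℕ) : Fin N)) (u + (j : Fin N)) := by
          intro j h1 h2
          refine Rtrans _ _ _ hRd ?_
          refine Rtrans _ _ _ (Rsymm _ _ ?_) (reachB j h1 h2)
          rw [hdrepr]
          exact reachB jd hjdk hjdN
        intro x hx
        obtain ⟨j, hj0, hjN, hjk, rfl⟩ := repr x hx
        rcases lt_or_gt_of_ne hjk with h | h
        · exact reachA j hj0 h
        · exact hRB j h hjN
  obtain ⟨b, hb⟩ := main
  rw [SimpleGraph.connected_iff]
  constructor
  · rintro ⟨x, hx⟩ ⟨y, hy⟩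
    obtain ⟨hb1, hx', hrx⟩ := hb x hx
    obtain ⟨hb2, hy', hry⟩ := hb y hy
    exact (hrx.symm.trans hry)
  · -- nonempty
    obtain ⟨x, hx, -⟩ := hb (u + ((if k ≤ 1 then k + 2 else 1 : ℕ) : Fin N))
      (memJ _ (by split <;> omega) (by split <;> omega) (by split <;> omega))
    exact ⟨⟨_, hx⟩⟩
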